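/- Let p > n + 1 be a prime and let A be an n×n matrix over the p-adic integers Z_p with A^p = 1. Then A is the identity matrix. -/

import Mathlib

open Polynomial

lemma cyclotomic_padic_irreducible (p : ℕ) [Fact p.Prime] :
    Irreducible (cyclotomic p ℚ_[p]) := by
  have hp : p.Prime := Fact.out
  have hpu : ¬ IsUnit ((p : ℤ_[p])) := PadicInt.prime_p.not_unit
  have hX1 : ∀ (R : Type) [CommRing R], (X + 1 : R[X]) = X + C 1 := by
    intro R _; rw [map_one]
  set g : ℤ_[p][X] := (cyclotomic p ℤ_[p]).comp (X + 1) with hg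
  have hgm : g.Monic := (cyclotomic.monic p _).comp (by rw [hX1]; exact monic_X_add_C 1)
    (by rw [hX1, natDegree_X_add_C]; norm_num)
  have hgZm : ((cyclotomic p ℤ).comp (X + 1)).Monic := (cyclotomic.monic p _).comp
    (by rw [hX1]; exact monic_X_add_C 1) (by rw [hX1, natDegree_X_add_C]; norm_num)
  have hgmap : g = ((cyclotomic p ℤ).comp (X + 1)).map (Int.castRingHom ℤ_[p]) := by
    rw [hg, Polynomial.map_comp, map_cyclotomic, Polynomial.map_add, Polynomial.map_one, map_X]
  have hdeg : g.natDegree = p - 1 := by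
    rw [hg, natDegree_comp, natDegree_cyclotomic, Nat.totient_prime hp, hX1,
      natDegree_X_add_C, mul_one]
  have hpne : (p : ℤ_[p]) ≠ 0 := Nat.cast_ne_zero.mpr hp.ne_zero
  have hEisZ := cyclotomic_comp_X_add_one_isEisensteinAt p
  have hgirr : Irreducible g := by
    apply irreducible_of_eisenstein_criterion
      (P := Ideal.span {(p : ℤ_[p])})
      ((Ideal.span_singleton_prime hpne).mpr PadicInt.prime_p)
    · rw [hgm.leadingCoeff, Ideal.mem_span_singleton]
      intro h
      exact hpu (isUnit_of_dvd_one h)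
    · intro i hi
      rw [Ideal.mem_span_singleton, hgmap, coeff_map]
      have hi' : i < ((cyclotomic p ℤ).comp (X + 1)).natDegree := by
        have h2 : i < g.natDegree := by
          have := degree_eq_natDegree (hgm.ne_zero)
          rw [this] at hi
          exact_mod_cast hi
        rwa [hgmap, hgZm.natDegree_map] at h2
      have hmem := hEisZ.mem hi'
      obtain ⟨c, hc⟩ := Ideal.mem_span_singleton.mp hmem
      exact ⟨(c : ℤ_[p]), by rw [hc]; simp⟩
    · rw [degree_eq_natDegree hgm.ne_zero, hdeg]
      exact_mod_cast Nat.sub_pos_of_lt hp.one_lt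
    · have h0 : g.coeff 0 = (p : ℤ_[p]) := by
        rw [coeff_zero_eq_eval_zero, hg, eval_comp]
        simp [eval_one_cyclotomic_prime]
      rw [h0, Ideal.span_singleton_pow, Ideal.mem_span_singleton]
      rintro ⟨c, hc⟩
      have hz : (p : ℤ_[p]) * (1 - p * c) = 0 := by linear_combination hc
      rcases mul_eq_zero.mp hz with h | h
      · exact hpne h
      · rw [sub_eq_zero] at h
        exact hpu (IsUnit.of_mul_eq_one c h.symm)
    · exact hgm.isPrimitive
  have hgirrQ : Irreducible (g.map (algebraMap ℤ_[p] ℚ_[p])) :=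
    (hgm.irreducible_iff_irreducible_map_fraction_map).mp hgirr
  have hmapg : g.map (algebraMap ℤ_[p] ℚ_[p]) = (cyclotomic p ℚ_[p]).comp (X + 1) := by
    rw [hg, Polynomial.map_comp, map_cyclotomic, Polynomial.map_add, Polynomial.map_one, map_X]
  rw [hmapg] at hgirrQ
  have heq : (cyclotomic p ℚ_[p]).comp (X + 1)
      = algEquivAevalXAddC (1 : ℚ_[p]) (cyclotomic p ℚ_[p]) := by
    simp only [algEquivAevalXAddC, algEquivOfCompEqX_apply]
    rw [hX1, comp_eq_aeval]
  rw [heq] at hgirrQ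
  exact (MulEquiv.irreducible_iff (algEquivAevalXAddC (1 : ℚ_[p])).toMulEquiv).mp hgirrQ

/-- Let `p > n + 1` be a prime and let `A` be an `n × n` matrix over the `p`-adic
integers `ℤ_[p]` with `A ^ p = 1`.  Then `A` is the identity matrix. -/
theorem padic_matrix_pth_power_trivial
    (p : ℕ) [Fact p.Prime] (n : ℕ) (hpn : p > n + 1)
    (A : Matrix (Fin n) (Fin n) ℤ_[p]) (hA : A ^ p = 1) :
    A = 1 := by
  rcases Nat.eq_zero_or_pos n with hn | hn
  · subst hn; exact Subsingleton.elim _ _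
  have hp : p.Prime := Fact.out
  haveI : NeZero n := ⟨hn.ne'⟩
  set f : ℤ_[p] →+* ℚ_[p] := algebraMap ℤ_[p] ℚ_[p] with hf
  set B : Matrix (Fin n) (Fin n) ℚ_[p] := A.map f with hBdef
  have hB : B ^ p = 1 := by
    have := congrArg (RingHom.mapMatrix (m := Fin n) f) hA
    simpa [map_pow] using this
  have hint : IsIntegral ℚ_[p] B := Algebra.IsIntegral.isIntegral B
  set q : ℚ_[p][X] := minpoly ℚ_[p] B with hq
  have hqdvd : q ∣ X ^ p - 1 := minpoly.dvd ℚ_[p] B (by simp [hB])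
  have hfact : (X : ℚ_[p][X]) ^ p - 1 = cyclotomic p ℚ_[p] * (X - 1) :=
    (cyclotomic_prime_mul_X_sub_one ℚ_[p] p).symm
  rw [hfact] at hqdvd
  have hqdeg : q.natDegree ≤ n := by
    have h1 : q ∣ B.charpoly := Matrix.minpoly_dvd_charpoly B
    have h2 : B.charpoly.natDegree = n := by
      simp [Matrix.charpoly_natDegree_eq_dim]
    have := natDegree_le_of_dvd h1 (B.charpoly_monic.ne_zero)
    omega
  have hndvd : ¬ cyclotomic p ℚ_[p] ∣ q := by
    intro hd
    have := natDegree_le_of_dvd hd (minpoly.ne_zero hint)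
    rw [natDegree_cyclotomic, Nat.totient_prime hp] at this
    omega
  have hcop : IsCoprime (cyclotomic p ℚ_[p]) q :=
    (cyclotomic_padic_irreducible p).coprime_iff_not_dvd.mpr hndvd
  have hX : q ∣ (X - 1 : ℚ_[p][X]) := hcop.symm.dvd_of_dvd_mul_left hqdvd
  have h0 : aeval B (X - 1 : ℚ_[p][X]) = 0 := by
    obtain ⟨c, hc⟩ := hX
    have hqa : (aeval B) q = 0 := minpoly.aeval _ _
    rw [hc, map_mul, hqa, zero_mul]
  have hB1 : B = 1 := by
    have : B - 1 = 0 := by simpa using h0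
    exact sub_eq_zero.mp this
  have hinj : Function.Injective f := IsFractionRing.injective ℤ_[p] ℚ_[p]
  ext i j
  apply hinj
  have h1 : B i j = (1 : Matrix (Fin n) (Fin n) ℚ_[p]) i j := by rw [hB1]
  simp only [hBdef, Matrix.map_apply] at h1
  rw [h1, Matrix.one_apply, Matrix.one_apply]
  split <;> simp
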